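/- arXiv:2412.03678 — 3 statements merged into one kernel-verified Lean document; each statement's English description precedes it below -/
import Mathlib

section
/- Let h₁, h₂ : [t₀, ∞) → ℝ be differentiable, c₁, c₂ > 0, with h₁'(t) = -c₁·h₁(t) + h₂(t) for all t, h₂(t₀) > 0, h₁(t₀) > 0, and h₂'(t) ≥ -c₂·h₂(t) for all t. Then h₁(t) ≥ h₁(t₀)·e^{-c₁(t - t₀)} > 0 for all t ≥ t₀. -/
private lemma mono_aux (t₀ : ℝ) (f f' : ℝ → ℝ)
    (hd : ∀ t ≥ t₀, HasDerivAt f (f' t) t)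
    (hnn : ∀ t ≥ t₀, 0 ≤ f' t) :
    ∀ t ≥ t₀, f t₀ ≤ f t := by
  have hmono : MonotoneOn f (Set.Ici t₀) := by
    apply monotoneOn_of_deriv_nonneg (convex_Ici t₀)
    · exact fun x hx => ((hd x hx).continuousAt).continuousWithinAt
    · intro x hx
      rw [interior_Ici] at hx
      exact ((hd x (le_of_lt hx)).differentiableAt).differentiableWithinAt
    · intro x hx
      rw [interior_Ici] at hx
      rw [(hd x (le_of_lt hx)).deriv]
      exact hnn x (le_of_lt hx)
  intro t ht
  exact hmono (Set.self_mem_Ici) ht ht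

theorem two_link_backstepping (t₀ c₁ c₂ : ℝ) (hc₁ : 0 < c₁) (hc₂ : 0 < c₂)
    (h₁ h₂ h₂' : ℝ → ℝ)
    (hderiv₁ : ∀ t ≥ t₀, HasDerivAt h₁ (-c₁ * h₁ t + h₂ t) t)
    (hderiv₂ : ∀ t ≥ t₀, HasDerivAt h₂ (h₂' t) t)
    (hineq₂ : ∀ t ≥ t₀, h₂' t ≥ -c₂ * h₂ t)
    (hinit₁ : h₁ t₀ > 0) (hinit₂ : h₂ t₀ > 0) :
    ∀ t ≥ t₀, h₁ t ≥ h₁ t₀ * Real.exp (-c₁ * (t - t₀)) ∧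
      h₁ t₀ * Real.exp (-c₁ * (t - t₀)) > 0 := by
  -- step 1: h₂ t > 0 for t ≥ t₀
  have hf₂ : ∀ t ≥ t₀, HasDerivAt (fun s => h₂ s * Real.exp (c₂ * s))
      ((h₂' t + c₂ * h₂ t) * Real.exp (c₂ * t)) t := by
    intro t ht
    have he : HasDerivAt (fun s => Real.exp (c₂ * s)) (c₂ * Real.exp (c₂ * t)) t := by
      simpa [mul_comm, Function.comp_def] using (Real.hasDerivAt_exp (c₂ * t)).comp t
        ((hasDerivAt_id t).const_mul c₂)
    have : HasDerivAt (fun s => h₂ s * Real.exp (c₂ * s)) _ t := (hderiv₂ t ht).mul he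
    convert this using 1; ring
  have h₂pos : ∀ t ≥ t₀, 0 < h₂ t := by
    intro t ht
    have := mono_aux t₀ _ _ hf₂ (fun s hs => by
      have := hineq₂ s hs
      have hx : 0 ≤ h₂' s + c₂ * h₂ s := by linarith
      exact mul_nonneg hx (Real.exp_pos _).le) t ht
    have hpos : 0 < h₂ t₀ * Real.exp (c₂ * t₀) := by positivity
    have h2 : 0 < h₂ t * Real.exp (c₂ * t) := lt_of_lt_of_le hpos this
    have hex : 0 < Real.exp (c₂ * t) := Real.exp_pos _
    nlinarith
  -- step 2: g t = h₁ t * exp (c₁ t) is monotone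
  have hf₁ : ∀ t ≥ t₀, HasDerivAt (fun s => h₁ s * Real.exp (c₁ * s))
      (h₂ t * Real.exp (c₁ * t)) t := by
    intro t ht
    have he : HasDerivAt (fun s => Real.exp (c₁ * s)) (c₁ * Real.exp (c₁ * t)) t := by
      simpa [mul_comm, Function.comp_def] using (Real.hasDerivAt_exp (c₁ * t)).comp t
        ((hasDerivAt_id t).const_mul c₁)
    have : HasDerivAt (fun s => h₁ s * Real.exp (c₁ * s)) _ t := (hderiv₁ t ht).mul he
    convert this using 1; ring
  have hmono := mono_aux t₀ _ _ hf₁ (fun s hs => by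
    have := h₂pos s hs; positivity)
  intro t ht
  constructor
  · have h := hmono t ht
    have hex : 0 < Real.exp (c₁ * t) := Real.exp_pos _
    rw [ge_iff_le, show -c₁ * (t - t₀) = c₁ * t₀ - c₁ * t by ring, Real.exp_sub,
      ← mul_div_assoc, div_le_iff₀ hex]
    exact h
  · positivity
end

section
/- Let n ≥ 1 and h₁, …, h_n : [t₀, ∞) → ℝ be differentiable with h_j(t₀) > 0 for all j, h_j'(t) = -c_j·h_j(t) + h_{j+1}(t) for j = 1, …, n-1, and h_n'(t) ≥ -c_n·h_n(t), where all c_j > 0. Then h₁(t) ≥ h₁(t₀)·e^{-c₁(t - t₀)} for all t ≥ t₀; in particular h₁(t) ≥ 0 for all t ≥ t₀. -/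
lemma gronwall_exp (t₀ c : ℝ) (f f' : ℝ → ℝ)
    (hd : ∀ t ≥ t₀, HasDerivAt f (f' t) t)
    (hge : ∀ t ≥ t₀, f' t ≥ -c * f t) :
    ∀ t ≥ t₀, f t ≥ f t₀ * Real.exp (-c * (t - t₀)) := by
  set g : ℝ → ℝ := fun t => f t * Real.exp (c * (t - t₀)) with hg
  have hgd : ∀ t ≥ t₀, HasDerivAt g
      ((f' t + c * f t) * Real.exp (c * (t - t₀))) t := by
    intro t ht
    have he : HasDerivAt (fun t => Real.exp (c * (t - t₀)))
        (Real.exp (c * (t - t₀)) * c) t := by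
      have h1 : HasDerivAt (fun t : ℝ => c * (t - t₀)) c t := by
        simpa using (((hasDerivAt_id t).sub_const t₀).const_mul c)
      simpa using h1.exp
    have := (hd t ht).mul he
    convert this using 1
    · rfl
    · rfl
    · rfl
    · ring
  have hmono : MonotoneOn g (Set.Ici t₀) := by
    apply monotoneOn_of_deriv_nonneg (convex_Ici t₀)
    · intro t ht
      exact ((hd t ht).continuousAt.continuousWithinAt.mul
        (Real.continuous_exp.comp (by continuity)).continuousWithinAt)
    · intro t ht
      rw [interior_Ici] at ht
      exact ((hgd t (le_of_lt ht)).differentiableAt).differentiableWithinAt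
    · intro t ht
      rw [interior_Ici] at ht
      rw [(hgd t (le_of_lt ht)).deriv]
      have := hge t (le_of_lt ht)
      have : 0 ≤ f' t + c * f t := by linarith
      positivity
  intro t ht
  have := hmono (Set.self_mem_Ici) ht ht
  have hgt₀ : g t₀ = f t₀ := by simp [hg]
  rw [hgt₀] at this
  have hepos : 0 < Real.exp (c * (t - t₀)) := Real.exp_pos _
  have key : f t₀ ≤ f t * Real.exp (c * (t - t₀)) := this
  have : f t₀ * Real.exp (-c * (t - t₀)) ≤
      (f t * Real.exp (c * (t - t₀))) * Real.exp (-c * (t - t₀)) := by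
    exact mul_le_mul_of_nonneg_right key (le_of_lt (Real.exp_pos _))
  calc f t₀ * Real.exp (-c * (t - t₀))
      ≤ (f t * Real.exp (c * (t - t₀))) * Real.exp (-c * (t - t₀)) := this
    _ = f t := by
        rw [mul_assoc, ← Real.exp_add]
        simp

theorem backstepping_chain_safety (n : ℕ) (hn : 1 ≤ n) (t₀ : ℝ)
    (h : Fin n → ℝ → ℝ) (h' : Fin n → ℝ → ℝ) (c : Fin n → ℝ)
    (hc : ∀ j, 0 < c j)
    (hinit : ∀ j, h j t₀ > 0)
    (hderiv : ∀ j, ∀ t ≥ t₀, HasDerivAt (h j) (h' j t) t)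
    (hchain : ∀ (j : Fin n) (hj : (j : ℕ) + 1 < n), ∀ t ≥ t₀,
      h' j t = -c j * h j t + h ⟨(j : ℕ) + 1, hj⟩ t)
    (hlast : ∀ t ≥ t₀, h' ⟨n - 1, by omega⟩ t ≥ -c ⟨n - 1, by omega⟩ * h ⟨n - 1, by omega⟩ t) :
    ∀ t ≥ t₀, h ⟨0, by omega⟩ t ≥ h ⟨0, by omega⟩ t₀ *
        Real.exp (-c ⟨0, by omega⟩ * (t - t₀)) ∧
      h ⟨0, by omega⟩ t ≥ 0 := by
  have Q : ∀ k : ℕ, ∀ j : Fin n, n ≤ (j : ℕ) + 1 + k →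
      ∀ t ≥ t₀, h j t ≥ h j t₀ * Real.exp (-c j * (t - t₀)) := by
    intro k
    induction k with
    | zero =>
      intro j hj
      have hjeq : j = ⟨n - 1, by omega⟩ := by
        apply Fin.ext; simp; omega
      rw [hjeq]
      exact gronwall_exp t₀ _ _ _ (hderiv _) hlast
    | succ k ih =>
      intro j hj
      by_cases hcase : n ≤ (j : ℕ) + 1 + k
      · exact ih j hcase
      · have hjlt : (j : ℕ) + 1 < n := by omega
        apply gronwall_exp t₀ _ _ _ (hderiv j)
        intro t ht
        rw [hchain j hjlt t ht]
        have hnext := ih ⟨(j : ℕ) + 1, hjlt⟩ (by simp; omega) t ht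
        have hpos : 0 < h ⟨(j : ℕ) + 1, hjlt⟩ t₀ := hinit _
        have : 0 < h ⟨(j : ℕ) + 1, hjlt⟩ t₀ *
            Real.exp (-c ⟨(j : ℕ) + 1, hjlt⟩ * (t - t₀)) := by positivity
        linarith
  intro t ht
  have h1 := Q (n - 1) ⟨0, by omega⟩ (by omega) t ht
  refine ⟨h1, ?_⟩
  have hpos : 0 < h ⟨0, by omega⟩ t₀ := hinit _
  have : 0 < h (⟨0, by omega⟩ : Fin n) t₀ * Real.exp (-c ⟨0, by omega⟩ * (t - t₀)) := by
    positivity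
  linarith
end

section
/- Let α : ℝ → ℝ be an extended class-K∞ function (strictly increasing, α(0) = 0, unbounded above and below) and h : [t₀,∞) → ℝ differentiable with h(t₀) ≥ 0 and h'(t) ≥ -α(h(t)) for all t. If additionally α is locally Lipschitz, then h(t) ≥ 0 for all t ≥ t₀. -/
theorem cbf_forward_invariance (t₀ : ℝ) (α : ℝ → ℝ)
    (hα_mono : StrictMono α) (hα_zero : α 0 = 0)
    (hα_above : ¬ BddAbove (Set.range α)) (hα_below : ¬ BddBelow (Set.range α))
    (hα_lip : LocallyLipschitz α)
    (h h' : ℝ → ℝ)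
    (hderiv : ∀ t ≥ t₀, HasDerivAt h (h' t) t)
    (hineq : ∀ t ≥ t₀, h' t ≥ -α (h t))
    (hinit : 0 ≤ h t₀) :
    ∀ t ≥ t₀, 0 ≤ h t := by
  intro t₁ ht₁
  by_contra hneg
  push_neg at hneg
  have hcont : ∀ t ≥ t₀, ContinuousAt h t := fun t ht => (hderiv t ht).continuousAt
  have hcontI : ContinuousOn h (Set.Icc t₀ t₁) :=
    fun x hx => (hcont x hx.1).continuousWithinAt
  set S : Set ℝ := Set.Icc t₀ t₁ ∩ h ⁻¹' Set.Ici 0 with hSdef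
  have hSne : S.Nonempty := ⟨t₀, ⟨le_refl _, ht₁⟩, hinit⟩
  have hSbdd : BddAbove S := ⟨t₁, fun x hx => hx.1.2⟩
  have hSclosed : IsClosed S :=
    hcontI.preimage_isClosed_of_isClosed isClosed_Icc isClosed_Ici
  set s := sSup S with hs
  have hsS : s ∈ S := hSclosed.csSup_mem hSne hSbdd
  obtain ⟨⟨hst₀, hst₁⟩, hhs⟩ := hsS
  have hhs0 : 0 ≤ h s := hhs
  have hst₁' : s < t₁ := lt_of_le_of_ne hst₁ (by
    intro heq; rw [heq] at hhs0; linarith)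
  -- on (s, t₁], h < 0
  have hneg' : ∀ t, s < t → t ≤ t₁ → h t < 0 := by
    intro t hts htt₁
    by_contra hge
    push_neg at hge
    have : t ∈ S := ⟨⟨hst₀.trans hts.le, htt₁⟩, hge⟩
    exact absurd (le_csSup hSbdd this) (not_le.2 hts)
  -- derivative positive on (s, t₁)
  have hpos : ∀ t ∈ Set.Ioo s t₁, 0 < h' t := by
    intro t ht
    have ht₀ : t₀ ≤ t := hst₀.trans ht.1.le
    have hht : h t < 0 := hneg' t ht.1 ht.2.le
    have : α (h t) < 0 := hα_zero ▸ hα_mono hht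
    linarith [hineq t ht₀]
  have hmono : StrictMonoOn h (Set.Icc s t₁) := by
    apply strictMonoOn_of_deriv_pos (convex_Icc s t₁)
    · exact fun x hx => (hcont x (hst₀.trans hx.1)).continuousWithinAt
    · intro x hx
      rw [interior_Icc] at hx
      rw [(hderiv x (hst₀.trans hx.1.le)).deriv]
      exact hpos x hx
  have := hmono ⟨le_refl s, hst₁⟩ ⟨hst₁, le_refl t₁⟩ hst₁'
  linarith
end
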